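/- Let n ≥ 3 be an odd natural number and let ζ = exp(2πi/3) ∈ ℂ. The set of triples (x,y,z) of nonzero complex numbers satisfying the leading term equations y² = 1, x²·yⁿ = z, and z² = x·y is exactly the six-element set {(1,1,1), (ζ,1,ζ²), (ζ²,1,ζ), (−1,−1,−1), (−ζ²,−1,−ζ), (−ζ,−1,−ζ²)}. -/
import Mathlib


open Complex

/-- solutions of the leading term equations for odd `n ≥ 3`. -/
theorem stmt_8 (n : ℕ) (hn : 3 ≤ n) (hodd : Odd n) :
    let ζ : ℂ := Complex.exp (2 * Real.pi * Complex.I / 3)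
    {p : ℂ × ℂ × ℂ | p.1 ≠ 0 ∧ p.2.1 ≠ 0 ∧ p.2.2 ≠ 0 ∧
        p.2.1 ^ 2 = 1 ∧ p.1 ^ 2 * p.2.1 ^ n = p.2.2 ∧ p.2.2 ^ 2 = p.1 * p.2.1} =
      {(1, 1, 1), (ζ, 1, ζ ^ 2), (ζ ^ 2, 1, ζ),
        (-1, -1, -1), (-ζ ^ 2, -1, -ζ), (-ζ, -1, -ζ ^ 2)} := by
  intro ζ
  have hζ0 : ζ ≠ 0 := Complex.exp_ne_zero _
  have hζ3 : ζ ^ 3 = 1 := by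
    show Complex.exp _ ^ 3 = 1
    rw [← Complex.exp_nat_mul]
    have h3 : ((3 : ℕ) : ℂ) * (2 * Real.pi * Complex.I / 3) = 2 * Real.pi * Complex.I := by
      push_cast; ring
    rw [h3]
    simpa [mul_comm, mul_assoc] using Complex.exp_two_pi_mul_I
  have hζ1 : ζ ≠ 1 := by
    have hform : ζ = Complex.exp ((2 * Real.pi / 3 : ℝ) * Complex.I) := by
      show Complex.exp _ = _
      congr 1
      push_cast; ring
    intro h
    have him : (1 : ℂ).im = Real.sin (2 * Real.pi / 3) := by
      rw [← h, hform, Complex.exp_ofReal_mul_I_im]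
    have hpos : 0 < Real.sin (2 * Real.pi / 3) := by
      apply Real.sin_pos_of_pos_of_lt_pi
      · positivity
      · nlinarith [Real.pi_pos]
    simp [Complex.one_im] at him
    linarith [him ▸ hpos]
  have hsum : ζ ^ 2 + ζ + 1 = 0 := by
    have hfac : (ζ - 1) * (ζ ^ 2 + ζ + 1) = 0 := by linear_combination hζ3
    rcases mul_eq_zero.mp hfac with h | h
    · exact (hζ1 (sub_eq_zero.mp h)).elim
    · exact h
  have hon : ((-1 : ℂ)) ^ n = -1 := hodd.neg_one_pow
  ext ⟨x, y, z⟩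
  simp only [Set.mem_setOf_eq, Set.mem_insert_iff, Set.mem_singleton_iff, Prod.mk.injEq]
  constructor
  · rintro ⟨hx, hy, hz, h1, h2, h3⟩
    have hy' : (y - 1) * (y + 1) = 0 := by linear_combination h1
    rcases mul_eq_zero.mp hy' with h | h
    · have hy1 : y = 1 := by linear_combination h
      subst hy1
      have hz2 : z = x ^ 2 := by rw [← h2, one_pow, mul_one]
      have hx4 : x ^ 4 = x := by
        have := h3; rw [hz2] at this; linear_combination this
      have hx3 : x ^ 3 = 1 := by
        have hfac : x * (x ^ 3 - 1) = 0 := by linear_combination hx4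
        rcases mul_eq_zero.mp hfac with h' | h'
        · exact absurd h' hx
        · linear_combination h'
      have hcube : (x - 1) * (x - ζ) * (x - ζ ^ 2) = 0 := by
        linear_combination hx3 + (x - x ^ 2) * hsum + (x - 1) * hζ3
      rcases mul_eq_zero.mp hcube with h' | h'
      · rcases mul_eq_zero.mp h' with h'' | h''
        · left; exact ⟨by linear_combination h'', rfl, by rw [hz2]; linear_combination (x + 1) * h''⟩
        · right; left; exact ⟨by linear_combination h'', rfl, by rw [hz2]; linear_combination (x + ζ) * h''⟩
      · right; right; left
        have hxz : x = ζ ^ 2 := by linear_combination h'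
        refine ⟨hxz, rfl, ?_⟩
        rw [hz2, hxz]
        linear_combination ζ * hζ3
    · have hy1 : y = -1 := by linear_combination h
      subst hy1
      have hz2 : z = -x ^ 2 := by rw [← h2, hon]; ring
      have hx4 : x ^ 4 = -x := by
        have := h3; rw [hz2] at this; linear_combination this
      have hx3 : x ^ 3 = -1 := by
        have hfac : x * (x ^ 3 + 1) = 0 := by linear_combination hx4
        rcases mul_eq_zero.mp hfac with h' | h'
        · exact absurd h' hx
        · linear_combination h'
      have hcube : (x + 1) * (x + ζ) * (x + ζ ^ 2) = 0 := by
        linear_combination hx3 + (x ^ 2 + x) * hsum + (x + 1) * hζ3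
      rcases mul_eq_zero.mp hcube with h' | h'
      · rcases mul_eq_zero.mp h' with h'' | h''
        · right; right; right; left
          exact ⟨by linear_combination h'', rfl, by rw [hz2]; linear_combination (1 - x) * h''⟩
        · right; right; right; right; right
          exact ⟨by linear_combination h'', rfl, by rw [hz2]; linear_combination (ζ - x) * h''⟩
      · right; right; right; right; left
        have hxz : x = -ζ ^ 2 := by linear_combination h'
        refine ⟨hxz, rfl, ?_⟩
        rw [hz2, hxz]
        linear_combination -ζ * hζ3
  · have hone : (1 : ℂ) ≠ 0 := one_ne_zero
    rintro (⟨hx, hy, hz⟩ | ⟨hx, hy, hz⟩ | ⟨hx, hy, hz⟩ | ⟨hx, hy, hz⟩ | ⟨hx, hy, hz⟩ | ⟨hx, hy, hz⟩) <;>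
      subst hx <;> subst hy <;> subst hz <;>
      refine ⟨by simp [hζ0], by simp, by simp [hζ0], by ring, ?_, ?_⟩ <;>
      simp [hon] <;> linear_combination (exp := 1) ζ * hζ3 <;> ring
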